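/- arXiv:2408.09625 — 4 statements merged into one kernel-verified Lean document; each statement's English description precedes it below -/
import Mathlib

section
/- (Lemma 2.1) Let φ be a holomorphic ℂ*-action on ℂⁿ having p ∈ ℂⁿ as a fixed point, and let ψ_p be the linearized action of φ at p. Then there exists a holomorphic map F_p : ℂⁿ → ℂⁿ such that (i) ψ_p^z ∘ F_p = F_p ∘ φ^z for every z ∈ ℂ*, and (ii) F_p(p) = 0 and the derivative DF_p(p) is the identity map of ℂⁿ. -/
open Complex Metric MeasureTheory Set Filter intervalIntegral Topology

namespace BochnerAux

variable {E : Type*} [NormedAddCommGroup E] [NormedSpace ℂ E]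
variable {φ : ℂ → E → E}

theorem phi_diffAt
    (hφ_hol : DifferentiableOn ℂ (fun q : ℂ × E => φ q.1 q.2)
      ({z : ℂ | z ≠ 0} ×ˢ (Set.univ : Set E)))
    {z : ℂ} (hz : z ≠ 0) (x : E) :
    DifferentiableAt ℂ (fun q : ℂ × E => φ q.1 q.2) (z, x) := by
  apply hφ_hol.differentiableAt
  apply (isOpen_ne.prod isOpen_univ).mem_nhds
  exact ⟨hz, trivial⟩

theorem phi_diff
    (hφ_hol : DifferentiableOn ℂ (fun q : ℂ × E => φ q.1 q.2)
      ({z : ℂ | z ≠ 0} ×ˢ (Set.univ : Set E)))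
    {z : ℂ} (hz : z ≠ 0) : Differentiable ℂ (φ z) := fun x =>
  (phi_diffAt hφ_hol hz x).comp x ((differentiableAt_const z).prodMk differentiableAt_id)

theorem line_hasDerivAt
    (hφ_hol : DifferentiableOn ℂ (fun q : ℂ × E => φ q.1 q.2)
      ({z : ℂ | z ≠ 0} ×ˢ (Set.univ : Set E)))
    {z : ℂ} (hz : z ≠ 0) (q w : E) :
    HasDerivAt (fun t : ℂ => φ z (q + t • w)) (fderiv ℂ (φ z) q w) 0 := by
  have hin : HasDerivAt (fun t : ℂ => q + t • w) w 0 := by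
    simpa using ((hasDerivAt_id (0 : ℂ)).smul_const w).const_add q
  have hout : HasFDerivAt (φ z) (fderiv ℂ (φ z) (q + (0:ℂ) • w)) (q + (0:ℂ) • w) :=
    (phi_diff hφ_hol hz _).hasFDerivAt
  simpa [Function.comp_def] using hout.comp_hasDerivAt 0 hin



theorem fderiv_apply_diffOn [ProperSpace E] [CompleteSpace E]
    (hφ_hol : DifferentiableOn ℂ (fun q : ℂ × E => φ q.1 q.2)
      ({z : ℂ | z ≠ 0} ×ˢ (Set.univ : Set E)))
    (q w : E) :
    DifferentiableOn ℂ (fun z => fderiv ℂ (φ z) q w) {z : ℂ | z ≠ 0} := by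
  intro z₀ hz₀'
  have hz₀ : z₀ ≠ 0 := hz₀'
  apply DifferentiableAt.differentiableWithinAt
  -- basic geometry
  have hr : (0:ℝ) < ‖z₀‖ := norm_pos_iff.2 hz₀
  set r : ℝ := ‖z₀‖ with hrdef
  set ε : ℝ := r / 4 with hεdef
  have hε : 0 < ε := by positivity
  have hball : ∀ z ∈ closedBall z₀ (r/2), z ≠ 0 := by
    intro z hz h0
    have h1 : dist z z₀ ≤ r/2 := mem_closedBall.1 hz
    rw [h0, dist_zero_left] at h1
    linarith
  -- the family
  set H : ℂ → ℂ → E := fun z t => φ z (q + t • w) with hHdef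
  have hHz : ∀ t : ℂ, ∀ z : ℂ, z ≠ 0 → DifferentiableAt ℂ (fun ζ => H ζ t) z := by
    intro t z hz
    exact (phi_diffAt hφ_hol hz _).comp z (differentiableAt_id.prodMk (differentiableAt_const _) :
      DifferentiableAt ℂ (fun ζ : ℂ => (ζ, q + t • w)) z)
  set d : ℂ → ℂ → E := fun z t => deriv (fun ζ => H ζ t) z with hddef
  have hd : ∀ {z : ℂ}, z ≠ 0 → ∀ t : ℂ, HasDerivAt (fun ζ => H ζ t) (d z t) z :=
    fun {z} hz t => (hHz t z hz).hasDerivAt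
  have hHt : ∀ {z : ℂ}, z ≠ 0 → Differentiable ℂ (H z) := by
    intro z hz
    exact (phi_diff hφ_hol hz).comp ((differentiable_id.smul_const w).const_add q)
  -- the scalar factor
  set c : ℝ → ℂ := fun θ => (circleMap 0 1 θ)⁻¹ * I with hcdef
  have hc_ne : ∀ θ, circleMap 0 1 θ ≠ 0 := fun θ => circleMap_ne_center one_ne_zero
  have hc_cont : Continuous c :=
    ((continuous_circleMap 0 1).inv₀ hc_ne).mul continuous_const
  have hc_norm : ∀ θ, ‖c θ‖ = 1 := by
    intro θ
    simp [hcdef, norm_mul, norm_inv, norm_circleMap_zero]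
  -- Cauchy formula
  have hform : ∀ z : ℂ, z ≠ 0 → fderiv ℂ (φ z) q w
      = (2 * ↑Real.pi * I)⁻¹ • ∫ θ in (0:ℝ)..2 * Real.pi, c θ • H z (circleMap 0 1 θ) := by
    intro z hz
    have h1 : deriv (H z) 0 = fderiv ℂ (φ z) q w := (line_hasDerivAt hφ_hol hz q w).deriv
    have h2 : deriv (H z) 0 = (2 * ↑Real.pi * I)⁻¹ •
        circleIntegral (fun ζ => (ζ - 0) ^ (-2 : ℤ) • H z ζ) 0 1 := by
      have h2' := (hHt hz).diffContOnCl.deriv_eq_smul_circleIntegral (c := (0:ℂ)) one_pos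
      have hint : circleIntegral (fun ζ => (ζ - 0) ^ (-2 : ℤ) • H z ζ) 0 1
          = circleIntegral (fun ζ => (1 / (ζ - 0) ^ 2) • H z ζ) 0 1 := by
        simp only [zpow_neg, one_div, zpow_ofNat]
      rw [hint, h2', smul_smul, inv_mul_cancel₀ two_pi_I_ne_zero, one_smul]
    rw [← h1, h2]
    congr 1
    rw [circleIntegral]
    apply intervalIntegral.integral_congr
    intro θ _
    have ht := hc_ne θ
    simp only [deriv_circleMap, sub_zero, smul_smul]
    congr 1
    rw [hcdef]
    rw [zpow_neg, zpow_two, mul_inv, mul_comm (circleMap 0 1 θ) I, mul_assoc,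
      ← mul_assoc (circleMap 0 1 θ), mul_inv_cancel₀ ht, one_mul, mul_comm I]
  -- compact bound on φ
  have hKS : (closedBall z₀ (r/2)) ×ˢ (closedBall q ‖w‖) ⊆ ({z : ℂ | z ≠ 0} ×ˢ (Set.univ : Set E)) :=
    fun a ha => ⟨hball a.1 ha.1, trivial⟩
  obtain ⟨C₀, hC₀⟩ :=
    ((isCompact_closedBall z₀ (r/2)).prod (isCompact_closedBall q ‖w‖)).exists_bound_of_continuousOn
      (hφ_hol.continuousOn.mono hKS)
  have hεball : ∀ z ∈ ball z₀ ε, ∀ ζ ∈ closedBall z ε, ζ ∈ closedBall z₀ (r/2) := by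
    intro z hz ζ hζ
    have h1 : dist ζ z ≤ ε := mem_closedBall.1 hζ
    have h2 : dist z z₀ < ε := mem_ball.1 hz
    have h3 : dist ζ z₀ ≤ dist ζ z + dist z z₀ := dist_triangle _ _ _
    rw [mem_closedBall]
    rw [hεdef] at h1 h2
    linarith
  have hzball : ∀ z ∈ ball z₀ ε, z ≠ 0 := fun z hz =>
    hball z (hεball z hz z (mem_closedBall_self hε.le))
  -- Cauchy estimate for the θ-derivative
  have hdbound : ∀ θ : ℝ, ∀ z ∈ ball z₀ ε, ‖d z (circleMap 0 1 θ)‖ ≤ C₀ / ε := by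
    intro θ z hz
    have hdc : DiffContOnCl ℂ (fun ζ => H ζ (circleMap 0 1 θ)) (ball z ε) := by
      apply DifferentiableOn.diffContOnCl
      intro ζ hζ
      refine (hHz _ ζ ?_).differentiableWithinAt
      exact hball ζ (hεball z hz ζ (closure_ball_subset_closedBall hζ))
    have hb : ∀ ζ ∈ sphere z ε, ‖H ζ (circleMap 0 1 θ)‖ ≤ C₀ := by
      intro ζ hζ
      refine hC₀ (ζ, q + circleMap 0 1 θ • w) ⟨?_, ?_⟩
      · exact hεball z hz ζ (Metric.sphere_subset_closedBall hζ)
      · rw [mem_closedBall, dist_self_add_left, norm_smul,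
          norm_circleMap_zero]
        simp
    simpa only [hddef] using norm_deriv_le_of_forall_mem_sphere_norm_le hε hdc hb
  -- measurability of the θ-derivative
  set δ : ℕ → ℂ := fun k => z₀ * ((((k:ℝ)+2)⁻¹ : ℝ) : ℂ) with hδdef
  have hδne : ∀ k, δ k ≠ 0 := by
    intro k
    refine mul_ne_zero hz₀ ?_
    rw [Ne, Complex.ofReal_eq_zero]
    positivity
  have hδz0 : ∀ k, z₀ + δ k ≠ 0 := by
    intro k
    have h1 : z₀ + δ k = z₀ * (1 + ((((k:ℝ)+2)⁻¹ : ℝ) : ℂ)) := by rw [hδdef]; ring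
    rw [h1]
    refine mul_ne_zero hz₀ ?_
    rw [show (1 : ℂ) + ((((k:ℝ)+2)⁻¹ : ℝ) : ℂ) = (((1 + ((k:ℝ)+2)⁻¹ : ℝ)) : ℂ) by push_cast; ring,
      Ne, Complex.ofReal_eq_zero]
    positivity
  have hδ0 : Tendsto δ atTop (𝓝 0) := by
    have h1 : Tendsto (fun k : ℕ => (((k:ℝ)+2)⁻¹ : ℝ)) atTop (𝓝 0) := by
      apply tendsto_inv_atTop_zero.comp
      exact tendsto_atTop_add_const_right _ 2 tendsto_natCast_atTop_atTop
    have h2 := (Complex.continuous_ofReal.tendsto 0).comp h1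
    have h3 := h2.const_mul z₀
    simpa only [Complex.ofReal_zero, mul_zero, Function.comp_apply] using h3
  have hδseq : Tendsto (fun k => z₀ + δ k) atTop (𝓝[≠] z₀) := by
    apply tendsto_nhdsWithin_of_tendsto_nhds_of_eventually_within
    · simpa using tendsto_const_nhds.add hδ0
    · filter_upwards with k
      intro h
      rw [Set.mem_singleton_iff, add_eq_left] at h
      exact hδne k h
  have hdm : AEStronglyMeasurable (fun θ => d z₀ (circleMap 0 1 θ))
      (volume.restrict (Ioc (0:ℝ) (2*Real.pi))) := by
    refine (stronglyMeasurable_of_tendsto atTop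
      (f := fun (k : ℕ) (θ : ℝ) =>
        (δ k)⁻¹ • (H (z₀ + δ k) (circleMap 0 1 θ) - H z₀ (circleMap 0 1 θ))) ?_ ?_).aestronglyMeasurable
    · intro k
      apply Continuous.stronglyMeasurable
      have hcm : Continuous fun θ : ℝ => q + circleMap 0 1 θ • w :=
        continuous_const.add ((continuous_circleMap 0 1).smul continuous_const)
      exact (((phi_diff hφ_hol (hδz0 k)).continuous.comp hcm).sub
        ((phi_diff hφ_hol hz₀).continuous.comp hcm)).const_smul _
    · rw [tendsto_pi_nhds]
      intro θ
      have h := hd hz₀ (circleMap 0 1 θ)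
      rw [hasDerivAt_iff_tendsto_slope] at h
      have h2 := h.comp hδseq
      refine h2.congr ?_
      intro k
      simp [slope, Function.comp]
  -- differentiation under the integral sign
  have hcm : Continuous fun θ : ℝ => q + circleMap 0 1 θ • w :=
    continuous_const.add ((continuous_circleMap 0 1).smul continuous_const)
  have key := hasDerivAt_integral_of_dominated_loc_of_deriv_le
    (𝕜 := ℂ) (μ := volume.restrict (Ioc (0:ℝ) (2*Real.pi)))
    (F := fun z θ => c θ • H z (circleMap 0 1 θ))
    (F' := fun z θ => c θ • d z (circleMap 0 1 θ))
    (x₀ := z₀) (bound := fun _ => C₀ / ε) (s := ball z₀ ε) (ball_mem_nhds z₀ hε)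
    (by
      filter_upwards [ball_mem_nhds z₀ hε] with z hz
      exact (hc_cont.smul
        ((phi_diff hφ_hol (hzball z hz)).continuous.comp hcm)).aestronglyMeasurable)
    (Continuous.integrableOn_Ioc
      (hc_cont.smul ((phi_diff hφ_hol hz₀).continuous.comp hcm)))
    (hc_cont.aestronglyMeasurable.smul hdm)
    (by
      apply Filter.Eventually.of_forall
      intro θ z hz
      rw [norm_smul, hc_norm, one_mul]
      exact hdbound θ z hz)
    (by
      exact MeasureTheory.integrableOn_const (μ := volume) (s := Ioc (0:ℝ) (2*Real.pi))
        measure_Ioc_lt_top.ne)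
    (by
      apply Filter.Eventually.of_forall
      intro θ z hz
      exact (hd (hzball z hz) (circleMap 0 1 θ)).const_smul (c θ))
  have hdiff : DifferentiableAt ℂ (fun z => (2 * ↑Real.pi * I)⁻¹ •
      ∫ θ in Ioc (0:ℝ) (2*Real.pi), c θ • H z (circleMap 0 1 θ)) z₀ :=
    key.2.differentiableAt.const_smul _
  apply hdiff.congr_of_eventuallyEq
  filter_upwards [ball_mem_nhds z₀ hε] with z hz
  rw [hform z (hzball z hz),
    intervalIntegral.integral_of_le (by positivity : (0:ℝ) ≤ 2*Real.pi)]

theorem diffOn_clm_of_apply {F : Type*} [NormedAddCommGroup F] [NormedSpace ℂ F]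
    [FiniteDimensional ℂ E] {g : ℂ → E →L[ℂ] F} {U : Set ℂ}
    (h : ∀ w : E, DifferentiableOn ℂ (fun z => g z w) U) :
    DifferentiableOn ℂ g U := by
  classical
  set b := Module.Basis.ofVectorSpace ℂ E with hb
  have hrep : ∀ z : ℂ, g z
      = ∑ i, (LinearMap.toContinuousLinearMap (b.coord i)).smulRight (g z (b i)) := by
    intro z
    ext x
    rw [ContinuousLinearMap.sum_apply]
    simp only [ContinuousLinearMap.smulRight_apply, LinearMap.coe_toContinuousLinearMap',
      Module.Basis.coord_apply]
    calc g z x = g z (∑ i, b.repr x i • b i) := by rw [b.sum_repr]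
      _ = ∑ i, b.repr x i • g z (b i) := by rw [map_sum]; simp only [_root_.map_smul]
  apply DifferentiableOn.congr (f := fun z =>
    ∑ i, (LinearMap.toContinuousLinearMap (b.coord i)).smulRight (g z (b i)))
  · apply DifferentiableOn.fun_sum
    intro i _
    have hL : Differentiable ℂ
        (ContinuousLinearMap.smulRightL ℂ E F (LinearMap.toContinuousLinearMap (b.coord i))) :=
      (ContinuousLinearMap.smulRightL ℂ E F
        (LinearMap.toContinuousLinearMap (b.coord i))).differentiable
    exact hL.comp_differentiableOn (h (b i))
  · exact fun z _ => hrep z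

theorem fderiv_bound [ProperSpace E]
    (hφ_hol : DifferentiableOn ℂ (fun q : ℂ × E => φ q.1 q.2)
      ({z : ℂ | z ≠ 0} ×ˢ (Set.univ : Set E)))
    (x₀ : E) :
    ∃ C : ℝ, 0 ≤ C ∧ ∀ z ∈ sphere (0:ℂ) 1, ∀ x ∈ ball x₀ 1, ‖fderiv ℂ (φ z) x‖ ≤ C := by
  have hsub : (sphere (0:ℂ) 1) ×ˢ (closedBall x₀ 3) ⊆ ({z : ℂ | z ≠ 0} ×ˢ (Set.univ : Set E)) := by
    intro a ha
    refine ⟨?_, trivial⟩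
    have h1 : ‖a.1‖ = 1 := mem_sphere_zero_iff_norm.1 ha.1
    intro h0
    rw [h0, norm_zero] at h1
    norm_num at h1
  obtain ⟨C₀, hC₀⟩ := ((isCompact_sphere (0:ℂ) 1).prod
    (isCompact_closedBall x₀ 3)).exists_bound_of_continuousOn (hφ_hol.continuousOn.mono hsub)
  refine ⟨max C₀ 0, le_max_right _ _, ?_⟩
  intro z hz x hx
  have hzne : z ≠ 0 := by
    have h1 : ‖z‖ = 1 := mem_sphere_zero_iff_norm.1 hz
    intro h0
    rw [h0, norm_zero] at h1
    norm_num at h1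
  apply ContinuousLinearMap.opNorm_le_bound _ (le_max_right _ _)
  intro v
  rcases eq_or_ne v 0 with rfl | hv
  · simp
  · have hvn : ‖v‖ ≠ 0 := norm_ne_zero_iff.2 hv
    set v' : E := ‖v‖⁻¹ • v with hv'def
    have hv'norm : ‖v'‖ = 1 := norm_smul_inv_norm hv
    have hline := line_hasDerivAt hφ_hol hzne x v'
    have hden : ‖deriv (fun t : ℂ => φ z (x + t • v')) 0‖ ≤ C₀ / 1 := by
      apply norm_deriv_le_of_forall_mem_sphere_norm_le one_pos
      · exact ((phi_diff hφ_hol hzne).comp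
          ((differentiable_id.smul_const v').const_add x)).diffContOnCl
      · intro t ht
        refine hC₀ (z, x + t • v') ⟨hz, ?_⟩
        rw [mem_closedBall]
        have h1 : dist (x + t • v') x₀ ≤ dist (x + t • v') x + dist x x₀ := dist_triangle _ _ _
        have h2 : dist (x + t • v') x = ‖t • v'‖ := dist_self_add_left _ _
        have h3 : ‖t • v'‖ = 1 := by
          rw [norm_smul, hv'norm, mem_sphere_zero_iff_norm.1 ht, one_mul]
        have h4 : dist x x₀ < 1 := mem_ball.1 hx
        linarith
    rw [hline.deriv, div_one] at hden
    have hvv : fderiv ℂ (φ z) x v = ‖v‖ • fderiv ℂ (φ z) x v' := by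
      rw [hv'def, ContinuousLinearMap.map_smul_of_tower, smul_smul, mul_inv_cancel₀ hvn, one_smul]
    rw [hvv, norm_smul, Real.norm_eq_abs, _root_.abs_of_nonneg (norm_nonneg v), mul_comm]
    exact mul_le_mul (hden.trans (le_max_left _ _)) le_rfl (norm_nonneg _)
      (le_max_right C₀ 0)

end BochnerAux

open BochnerAux

set_option maxHeartbeats 1000000
set_option synthInstance.maxHeartbeats 400000

/-- **Lemma 2.1.** Let `φ` be a holomorphic `ℂ*`-action on `ℂⁿ` fixing `p`, and let
`ψ_pᶻ = D(φᶻ)(p)` be the linearized action of `φ` at `p`. Then there is a holomorphic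
map `F_p : ℂⁿ → ℂⁿ` such that (i) `ψ_pᶻ ∘ F_p = F_p ∘ φᶻ` for all `z ∈ ℂ*`, and
(ii) `F_p p = 0` and `D F_p (p) = Id`. -/
theorem bochner_local_semiconjugation
    {n : ℕ} (φ : ℂ → EuclideanSpace ℂ (Fin n) → EuclideanSpace ℂ (Fin n))
    (p : EuclideanSpace ℂ (Fin n))
    (hφ_hol : DifferentiableOn ℂ
      (fun q : ℂ × EuclideanSpace ℂ (Fin n) => φ q.1 q.2)
      ({z : ℂ | z ≠ 0} ×ˢ (Set.univ : Set (EuclideanSpace ℂ (Fin n)))))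
    (hφ_one : φ 1 = id)
    (hφ_mul : ∀ z w : ℂ, z ≠ 0 → w ≠ 0 → φ (z * w) = φ z ∘ φ w)
    (hp : ∀ z : ℂ, z ≠ 0 → φ z p = p) :
    ∃ F : EuclideanSpace ℂ (Fin n) → EuclideanSpace ℂ (Fin n),
      Differentiable ℂ F ∧
      (∀ z : ℂ, z ≠ 0 → ∀ x, fderiv ℂ (φ z) p (F x) = F (φ z x)) ∧
      F p = 0 ∧
      fderiv ℂ F p = ContinuousLinearMap.id ℂ (EuclideanSpace ℂ (Fin n)) := by
  classical
  set U : Set ℂ := {z : ℂ | z ≠ 0} with hUdef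
  set A : ℂ → (EuclideanSpace ℂ (Fin n) →L[ℂ] EuclideanSpace ℂ (Fin n)) := fun z => fderiv ℂ (φ z) p with hAdef
  set u : ℝ → ℂ := fun θ => Complex.exp (θ * Complex.I) with hudef
  have hu_ne : ∀ θ : ℝ, u θ ≠ 0 := fun θ => Complex.exp_ne_zero _
  have hu_norm : ∀ θ : ℝ, ‖u θ‖ = 1 := fun θ => by
    rw [hudef]; exact norm_exp_ofReal_mul_I θ
  have hu_mem : ∀ θ : ℝ, u θ ∈ sphere (0:ℂ) 1 := fun θ => by
    rw [mem_sphere_zero_iff_norm]; exact hu_norm θ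
  have hu_add : ∀ a b : ℝ, u (a + b) = u a * u b := fun a b => by
    rw [hudef]; push_cast; rw [add_mul, Complex.exp_add]
  have hu_zero : u 0 = 1 := by rw [hudef]; simp
  have hu_cont : Continuous u :=
    Complex.continuous_exp.comp (Complex.continuous_ofReal.mul continuous_const)
  have hu_per : Function.Periodic u (2 * Real.pi) := by
    intro θ
    rw [hu_add]
    have h2 : u (2 * Real.pi) = 1 := by
      rw [hudef]
      push_cast
      exact Complex.exp_two_pi_mul_I
    rw [h2, mul_one]
  -- cocycle structure of the linearization
  have hA1 : A 1 = ContinuousLinearMap.id ℂ (EuclideanSpace ℂ (Fin n)) := by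
    rw [hAdef]
    show fderiv ℂ (φ 1) p = _
    rw [hφ_one, fderiv_id]
  have hAmul : ∀ z w : ℂ, z ≠ 0 → w ≠ 0 → A (z * w) = (A z).comp (A w) := by
    intro z w hz hw
    show fderiv ℂ (φ (z * w)) p = (fderiv ℂ (φ z) p).comp (fderiv ℂ (φ w) p)
    rw [hφ_mul z w hz hw]
    have h := fderiv_comp p (phi_diff hφ_hol hz (φ w p)) (phi_diff hφ_hol hw p)
    rw [hp w hw] at h
    exact h
  -- the averaged integrand
  set G : ℝ → EuclideanSpace ℂ (Fin n) → EuclideanSpace ℂ (Fin n) := fun θ x => A (u (-θ)) (φ (u θ) x - p) with hGdef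
  have hAconts : ∀ q : EuclideanSpace ℂ (Fin n), ContinuousOn (fun z : ℂ => fderiv ℂ (φ z) q) U := fun q =>
    (diffOn_clm_of_apply (fun w => fderiv_apply_diffOn hφ_hol q w)).continuousOn
  have hAcont : Continuous fun θ : ℝ => A (u (-θ)) := by
    refine (hAconts p).comp_continuous (hu_cont.comp continuous_neg) ?_
    exact fun θ => hu_ne (-θ)
  have hφx_cont : ∀ x : EuclideanSpace ℂ (Fin n), Continuous fun θ : ℝ => φ (u θ) x := by
    intro x
    refine hφ_hol.continuousOn.comp_continuous (hu_cont.prodMk continuous_const) ?_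
    exact fun θ => ⟨hu_ne θ, trivial⟩
  have hGcont : ∀ x : EuclideanSpace ℂ (Fin n), Continuous fun θ => G θ x := by
    intro x
    exact hAcont.clm_apply ((hφx_cont x).sub continuous_const)
  have hGint : ∀ x : EuclideanSpace ℂ (Fin n), IntervalIntegrable (fun θ => G θ x) volume 0 (2 * Real.pi) :=
    fun x => (hGcont x).intervalIntegrable 0 (2 * Real.pi)
  have hGper : ∀ x : EuclideanSpace ℂ (Fin n), Function.Periodic (fun θ => G θ x) (2 * Real.pi) := by
    intro x θ
    have h1 : u (-(θ + 2 * Real.pi)) = u (-θ) := by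
      rw [show -(θ + 2 * Real.pi) = -θ - 2 * Real.pi by ring, hu_per.sub_eq]
    simp only [hGdef, h1, hu_per θ]
  set F : EuclideanSpace ℂ (Fin n) → EuclideanSpace ℂ (Fin n) := fun x => (2 * Real.pi)⁻¹ • ∫ θ in (0:ℝ)..(2 * Real.pi), G θ x with hFdef
  -- `F` is entire, with explicit derivative
  have hFhas : ∀ x₀ : EuclideanSpace ℂ (Fin n), HasFDerivAt F ((2 * Real.pi)⁻¹ •
      ∫ θ in (0:ℝ)..(2 * Real.pi), (A (u (-θ))).comp (fderiv ℂ (φ (u θ)) x₀)) x₀ := by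
    intro x₀
    obtain ⟨C, hC0, hC⟩ := fderiv_bound hφ_hol x₀
    obtain ⟨C₁, hC₁⟩ := (isCompact_sphere (0:ℂ) 1).exists_bound_of_continuousOn
      ((hAconts p).mono (fun z hz => by
        intro h0
        have h1 : ‖z‖ = 1 := mem_sphere_zero_iff_norm.1 hz
        rw [h0, norm_zero] at h1
        norm_num at h1))
    have hC₁0 : 0 ≤ C₁ := (norm_nonneg _).trans (hC₁ 1 (by simp))
    have key := hasFDerivAt_integral_of_dominated_of_fderiv_le
      (𝕜 := ℂ) (μ := volume.restrict (Set.Ioc (0:ℝ) (2 * Real.pi)))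
      (F := fun x θ => G θ x)
      (F' := fun x θ => (A (u (-θ))).comp (fderiv ℂ (φ (u θ)) x))
      (x₀ := x₀) (bound := fun _ => C₁ * C) (s := ball x₀ 1) (ball_mem_nhds x₀ one_pos)
      (Filter.Eventually.of_forall fun x => (hGcont x).aestronglyMeasurable)
      (Continuous.integrableOn_Ioc (hGcont x₀))
      (by
        refine Continuous.aestronglyMeasurable ?_
        refine hAcont.clm_comp ?_
        exact (hAconts x₀).comp_continuous hu_cont fun θ => hu_ne θ)
      (by
        refine Filter.Eventually.of_forall fun θ => ?_
        intro x hx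
        refine (ContinuousLinearMap.opNorm_comp_le _ _).trans ?_
        refine mul_le_mul (hC₁ _ (hu_mem (-θ))) (hC _ (hu_mem θ) x hx) (norm_nonneg _) hC₁0)
      (by
        exact MeasureTheory.integrableOn_const (μ := volume) (s := Ioc (0:ℝ) (2*Real.pi))
          measure_Ioc_lt_top.ne)
      (by
        refine Filter.Eventually.of_forall fun θ => ?_
        intro x hx
        have h1 : HasFDerivAt (φ (u θ)) (fderiv ℂ (φ (u θ)) x) x :=
          (phi_diff hφ_hol (hu_ne θ) x).hasFDerivAt
        exact (A (u (-θ))).hasFDerivAt.comp x (h1.sub_const p))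
    have h2 := key.const_smul ((2 * Real.pi)⁻¹ : ℝ)
    have h3 : (fun x => ((2 * Real.pi)⁻¹ : ℝ) •
        ∫ θ, G θ x ∂(volume.restrict (Set.Ioc (0:ℝ) (2 * Real.pi)))) = F := by
      funext x
      show _ = (2 * Real.pi)⁻¹ • ∫ θ in (0:ℝ)..(2 * Real.pi), G θ x
      rw [intervalIntegral.integral_of_le Real.two_pi_pos.le]
    rw [← h3]
    have h4 : ∫ θ, (A (u (-θ))).comp (fderiv ℂ (φ (u θ)) x₀)
          ∂(volume.restrict (Set.Ioc (0:ℝ) (2 * Real.pi)))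
        = ∫ θ in (0:ℝ)..(2 * Real.pi), (A (u (-θ))).comp (fderiv ℂ (φ (u θ)) x₀) :=
      (intervalIntegral.integral_of_le Real.two_pi_pos.le).symm
    rw [h4] at h2
    exact h2
  have hFdiffble : Differentiable ℂ F := fun x => (hFhas x).differentiableAt
  -- value and derivative at p
  have hFp0 : F p = 0 := by
    have h0 : ∀ θ : ℝ, G θ p = 0 := by
      intro θ
      simp only [hGdef, hp (u θ) (hu_ne θ), sub_self, map_zero]
    rw [hFdef]
    simp only [h0, intervalIntegral.integral_zero, smul_zero]
  have hFderiv : fderiv ℂ F p = ContinuousLinearMap.id ℂ (EuclideanSpace ℂ (Fin n)) := by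
    have h := (hFhas p).fderiv
    rw [h]
    have h1 : ∀ θ ∈ uIcc (0:ℝ) (2 * Real.pi),
        (A (u (-θ))).comp (fderiv ℂ (φ (u θ)) p) = ContinuousLinearMap.id ℂ (EuclideanSpace ℂ (Fin n)) := by
      intro θ _
      have h2 : (A (u (-θ))).comp (A (u θ)) = A (u (-θ) * u θ) :=
        (hAmul _ _ (hu_ne _) (hu_ne _)).symm
      have h3 : u (-θ) * u θ = 1 := by rw [← hu_add, neg_add_cancel, hu_zero]
      show (A (u (-θ))).comp (A (u θ)) = _
      rw [h2, h3, hA1]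
    rw [intervalIntegral.integral_congr h1, intervalIntegral.integral_const, sub_zero,
      smul_smul, inv_mul_cancel₀ Real.two_pi_pos.ne', one_smul]
  -- circle equivariance
  have hcirc : ∀ (t : ℝ) (x : EuclideanSpace ℂ (Fin n)), A (u t) (F x) = F (φ (u t) x) := by
    intro t x
    have hmap : A (u t) (F x) = (2 * Real.pi)⁻¹ •
        ∫ θ in (0:ℝ)..(2 * Real.pi), A (u t) (G θ x) := by
      rw [hFdef]
      show A (u t) ((2 * Real.pi)⁻¹ • ∫ θ in (0:ℝ)..(2 * Real.pi), G θ x) = _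
      rw [ContinuousLinearMap.map_smul_of_tower,
        (A (u t)).intervalIntegral_comp_comm (hGint x)]
    have hpt : ∀ θ : ℝ, A (u t) (G θ x) = G (θ - t) (φ (u t) x) := by
      intro θ
      have e1 : A (u t) (A (u (-θ)) (φ (u θ) x - p))
          = A (u t * u (-θ)) (φ (u θ) x - p) := by
        rw [hAmul _ _ (hu_ne _) (hu_ne _)]
        rfl
      have e2 : u t * u (-θ) = u (-(θ - t)) := by
        rw [← hu_add]
        congr 1
        ring
      have e3 : φ (u (θ - t)) (φ (u t) x) = φ (u θ) x := by
        have h := hφ_mul (u (θ - t)) (u t) (hu_ne _) (hu_ne _)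
        have h2 : φ (u (θ - t) * u t) x = (φ (u (θ - t)) ∘ φ (u t)) x := by rw [h]
        rw [← hu_add] at h2
        have h3 : θ - t + t = θ := by ring
        rw [h3] at h2
        exact h2.symm
      show A (u t) (A (u (-θ)) (φ (u θ) x - p)) = A (u (-(θ - t))) (φ (u (θ - t)) (φ (u t) x) - p)
      rw [e1, e2, e3]
    rw [hmap, intervalIntegral.integral_congr (fun θ _ => hpt θ)]
    have hshift : ∫ θ in (0:ℝ)..(2 * Real.pi), G (θ - t) (φ (u t) x)
        = ∫ θ in (0:ℝ) - t..(2 * Real.pi) - t, G θ (φ (u t) x) :=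
      intervalIntegral.integral_comp_sub_right (fun θ => G θ (φ (u t) x)) t
    have hper := (hGper (φ (u t) x)).intervalIntegral_add_eq ((0:ℝ) - t) 0
    rw [zero_add] at hper
    rw [show (0:ℝ) - t + 2 * Real.pi = 2 * Real.pi - t by ring] at hper
    rw [hshift, hper]
  -- extension to all of ℂ* by the identity theorem
  have hsemi : ∀ z : ℂ, z ≠ 0 → ∀ x : EuclideanSpace ℂ (Fin n), fderiv ℂ (φ z) p (F x) = F (φ z x) := by
    intro z hz x
    have ha1 : AnalyticOnNhd ℂ (fun ζ : ℂ => fderiv ℂ (φ ζ) p (F x)) U :=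
      (fderiv_apply_diffOn hφ_hol p (F x)).analyticOnNhd isOpen_ne
    have ha2 : AnalyticOnNhd ℂ (fun ζ : ℂ => F (φ ζ x)) U := by
      refine DifferentiableOn.analyticOnNhd ?_ isOpen_ne
      intro ζ hζ
      have hζ0 : ζ ≠ 0 := hζ
      have h1 : DifferentiableAt ℂ (fun ζ : ℂ => φ ζ x) ζ :=
        (phi_diffAt hφ_hol hζ0 x).comp
          (g := fun q : ℂ × EuclideanSpace ℂ (Fin n) => φ q.1 q.2) ζ (differentiableAt_id.prodMk (differentiableAt_const x) :
          DifferentiableAt ℂ (fun ζ : ℂ => (ζ, x)) ζ)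
      exact ((hFdiffble (φ ζ x)).comp ζ h1).differentiableWithinAt
    have hpre : IsPreconnected U := by
      have hUe : U = ({0}ᶜ : Set ℂ) := by
        ext ζ
        simp [hUdef]
      rw [hUe]
      exact (isConnected_compl_singleton_of_one_lt_rank
        (by rw [rank_real_complex]; norm_num) 0).isPreconnected
    have hfreq : ∃ᶠ ζ in 𝓝[≠] (1:ℂ), fderiv ℂ (φ ζ) p (F x) = F (φ ζ x) := by
      have hseq : Tendsto (fun k : ℕ => u (((k:ℝ) + 2)⁻¹)) atTop (𝓝[≠] (1:ℂ)) := by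
        apply tendsto_nhdsWithin_of_tendsto_nhds_of_eventually_within
        · have h1 : Tendsto (fun k : ℕ => (((k:ℝ) + 2)⁻¹ : ℝ)) atTop (𝓝 0) := by
            apply tendsto_inv_atTop_zero.comp
            exact tendsto_atTop_add_const_right _ 2 tendsto_natCast_atTop_atTop
          have h2 := (hu_cont.tendsto 0).comp h1
          rw [hu_zero] at h2
          exact h2
        · filter_upwards with k
          intro hmem
          rw [Set.mem_singleton_iff] at hmem
          have h3 : (0:ℝ) < ((k:ℝ) + 2)⁻¹ := by positivity
          have h4 : (((k:ℝ) + 2)⁻¹ : ℝ) ≤ 1 := by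
            rw [inv_le_one_iff₀]
            right
            linarith [Nat.cast_nonneg (α := ℝ) k]
          rw [hudef] at hmem
          rw [Complex.exp_eq_one_iff] at hmem
          obtain ⟨m, hm⟩ := hmem
          have hI : ((((k:ℝ) + 2)⁻¹ : ℝ) : ℂ) = (m : ℂ) * (2 * (Real.pi : ℂ)) := by
            have := mul_right_cancel₀ Complex.I_ne_zero
              (by rw [hm]; ring :
                ((((k:ℝ) + 2)⁻¹ : ℝ) : ℂ) * Complex.I = ((m : ℂ) * (2 * (Real.pi : ℂ))) * Complex.I)
            exact this
          have hR : (((k:ℝ) + 2)⁻¹ : ℝ) = (m : ℝ) * (2 * Real.pi) := by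
            exact_mod_cast hI
          rcases le_or_gt (m : ℝ) 0 with hm0 | hm0
          · nlinarith [Real.two_pi_pos]
          · have hm1 : (1:ℝ) ≤ (m : ℝ) := by exact_mod_cast hm0
            nlinarith [Real.two_pi_pos, Real.pi_gt_three]
      apply hseq.frequently
      apply Filter.Frequently.of_forall
      intro k
      exact hcirc (((k:ℝ) + 2)⁻¹) x
    exact (ha1.eqOn_of_preconnected_of_frequently_eq ha2 hpre
      (show (1:ℂ) ∈ U from one_ne_zero) hfreq) hz
  exact ⟨F, hFdiffble, hsemi, hFp0, hFderiv⟩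
end

section
/- Let A be a ℂ-linear endomorphism of ℂⁿ such that exp(2πi·A) is the identity map. Then A is diagonalizable (ℂⁿ admits a basis consisting of eigenvectors of A) and every eigenvalue of A is an integer. -/
open Complex

section Aux

variable {E : Type*} [NormedAddCommGroup E] [NormedSpace ℂ E] [CompleteSpace E]

private lemma exp_apply' (B : E →L[ℂ] E) (v : E) :
    NormedSpace.exp B v = ∑' k : ℕ, ((k.factorial : ℂ))⁻¹ • (B ^ k) v := by
  rw [NormedSpace.exp_eq_tsum ℂ]
  have := (ContinuousLinearMap.apply ℂ E v).map_tsum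
    (NormedSpace.expSeries_summable' (𝕂 := ℂ) B)
  simpa using this

private lemma exp_apply_eigen (B : E →L[ℂ] E) (μ : ℂ) (v : E) (h : B v = μ • v) :
    NormedSpace.exp B v = Complex.exp μ • v := by
  have hpow : ∀ k : ℕ, (B ^ k) v = μ ^ k • v := by
    intro k
    induction k with
    | zero => simp
    | succ k ih =>
      rw [pow_succ, ContinuousLinearMap.mul_apply, h, map_smul, ih, smul_smul, pow_succ,
        mul_comm]
  rw [exp_apply']
  simp_rw [hpow, smul_smul, ← smul_eq_mul]
  rw [Summable.tsum_smul_const (NormedSpace.expSeries_summable' (𝕂 := ℂ) μ)]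
  congr 1
  rw [Complex.exp_eq_exp_ℂ, NormedSpace.exp_eq_tsum ℂ]

private lemma exp_eq_one_of_eigen (A : E →L[ℂ] E)
    (hA : NormedSpace.exp (((2 * Real.pi * Complex.I) : ℂ) • A) = 1)
    (μ : ℂ) (v : E) (hv : v ≠ 0) (h : A v = μ • v) :
    Complex.exp ((2 * Real.pi * Complex.I : ℂ) * μ) = 1 := by
  set c : ℂ := (2 * Real.pi * Complex.I : ℂ) with hc
  have h1 : (c • A) v = (c * μ) • v := by
    rw [ContinuousLinearMap.smul_apply, h, smul_smul]
  have h2 : NormedSpace.exp (c • A) v = Complex.exp (c * μ) • v := exp_apply_eigen _ _ _ h1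
  rw [hA, ContinuousLinearMap.one_apply] at h2
  have h3 : (Complex.exp (c * μ) - 1) • v = 0 := by rw [sub_smul, one_smul, ← h2, sub_self]
  rcases smul_eq_zero.mp h3 with h | h
  · exact sub_eq_zero.mp h
  · exact absurd h hv

private lemma eig_int (A : E →L[ℂ] E)
    (hA : NormedSpace.exp (((2 * Real.pi * Complex.I) : ℂ) • A) = 1)
    (μ : ℂ) (v : E) (hv : v ≠ 0) (h : A v = μ • v) : ∃ k : ℤ, μ = (k : ℂ) := by
  have h4 := exp_eq_one_of_eigen A hA μ v hv h
  obtain ⟨k, hk⟩ := Complex.exp_eq_one_iff.mp h4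
  refine ⟨k, ?_⟩
  have hc0 : (2 * Real.pi * Complex.I : ℂ) ≠ 0 := by
    simpa [Complex.ofReal_mul] using Complex.two_pi_I_ne_zero
  have : (2 * Real.pi * Complex.I : ℂ) * μ = (2 * Real.pi * Complex.I : ℂ) * (k : ℂ) := by
    rw [hk]; ring
  exact mul_left_cancel₀ hc0 this

private lemma step (A : E →L[ℂ] E)
    (hA : NormedSpace.exp (((2 * Real.pi * Complex.I) : ℂ) • A) = 1)
    (μ : ℂ) (v w : E) (hvw : A v = μ • v + w) (hw : A w = μ • w) : w = 0 := by
  by_cases h0 : w = 0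
  · exact h0
  have hexp1 : Complex.exp ((2 * Real.pi * Complex.I : ℂ) * μ) = 1 :=
    exp_eq_one_of_eigen A hA μ w h0 hw
  set c : ℂ := (2 * Real.pi * Complex.I : ℂ) with hc
  set N : E →L[ℂ] E := A - μ • (1 : E →L[ℂ] E) with hN
  have hNv : N v = w := by
    simp [hN, hvw, ContinuousLinearMap.sub_apply]
  have hNw : N w = 0 := by
    simp [hN, hw, ContinuousLinearMap.sub_apply]
  set B1 : E →L[ℂ] E := (c * μ) • (1 : E →L[ℂ] E) with hB1
  set B2 : E →L[ℂ] E := c • N with hB2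
  have hcomm : Commute B1 B2 := ((Commute.one_left N).smul_left (c * μ)).smul_right c
  have hsum : c • A = B1 + B2 := by
    rw [hB1, hB2, hN]
    module
  have hB2v : B2 v = c • w := by rw [hB2, ContinuousLinearMap.smul_apply, hNv]
  have hB2w : B2 w = 0 := by rw [hB2, ContinuousLinearMap.smul_apply, hNw, smul_zero]
  have hpow2 : ∀ m : ℕ, (B2 ^ (m + 2)) v = 0 := by
    intro m
    induction m with
    | zero =>
      rw [pow_succ, ContinuousLinearMap.mul_apply, pow_one, hB2v, map_smul, hB2w, smul_zero]
    | succ m ih =>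
      have : m + 1 + 2 = (m + 2) + 1 := rfl
      rw [this, pow_succ', ContinuousLinearMap.mul_apply, ih, map_zero]
  -- exp B2 v = v + c • w
  have hexpB2 : NormedSpace.exp B2 v = v + c • w := by
    rw [exp_apply']
    rw [tsum_eq_sum (s := {0, 1}) ?h]
    · simp [hB2v, Finset.sum_insert]
    · intro k hk
      have h2le : 2 ≤ k := by
        simp only [Finset.mem_insert, Finset.mem_singleton] at hk
        omega
      obtain ⟨m, rfl⟩ : ∃ m, k = m + 2 := ⟨k - 2, by omega⟩
      rw [hpow2, smul_zero]
  have hexpB1 : ∀ u : E, NormedSpace.exp B1 u = u := by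
    intro u
    have : B1 u = (c * μ) • u := by rw [hB1, ContinuousLinearMap.smul_apply,
      ContinuousLinearMap.one_apply]
    rw [exp_apply_eigen _ _ _ this, hexp1, one_smul]
  have key : NormedSpace.exp (c • A) v = v + c • w := by
    rw [hsum, NormedSpace.exp_add_of_commute_of_mem_ball (𝕂 := ℂ) hcomm
      ((NormedSpace.expSeries_radius_eq_top ℂ (E →L[ℂ] E)).symm ▸ edist_lt_top _ _)
      ((NormedSpace.expSeries_radius_eq_top ℂ (E →L[ℂ] E)).symm ▸ edist_lt_top _ _), ContinuousLinearMap.mul_apply, hexpB2,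
      map_add, hexpB1, map_smul, hexpB1]
  rw [hA, ContinuousLinearMap.one_apply] at key
  have : c • w = 0 := by
    have := key.symm
    rwa [add_eq_left] at this
  rcases smul_eq_zero.mp this with h | h
  · exact absurd h (hc ▸ Complex.two_pi_I_ne_zero)
  · exact h

private lemma nilp_eigen (A : E →L[ℂ] E)
    (hA : NormedSpace.exp (((2 * Real.pi * Complex.I) : ℂ) • A) = 1)
    (μ : ℂ) : ∀ (m : ℕ) (v : E),
    (((A - μ • (1 : E →L[ℂ] E)) ^ m)) v = 0 → A v = μ • v := by
  intro m
  induction m with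
  | zero =>
    intro v hv
    simp only [pow_zero, ContinuousLinearMap.one_apply] at hv
    simp [hv]
  | succ m ih =>
    intro v hv
    set N : E →L[ℂ] E := A - μ • (1 : E →L[ℂ] E) with hN
    have h1 : (N ^ m) (N v) = 0 := by
      rw [← ContinuousLinearMap.mul_apply, ← pow_succ] at *
      exact hv
    have h2 : A (N v) = μ • (N v) := ih (N v) h1
    have h3 : N v = 0 := by
      refine step A hA μ v (N v) ?_ h2
      rw [hN]
      simp [ContinuousLinearMap.sub_apply]
    have : A v - μ • v = 0 := by
      rw [← h3, hN]; simp [ContinuousLinearMap.sub_apply]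
    linear_combination (norm := module) this

end Aux

/-- Let `A` be a `ℂ`-linear endomorphism of `ℂⁿ` such that `exp(2πi A)` is the identity
map. Then `A` is diagonalizable (`ℂⁿ` admits a basis of eigenvectors of `A`) and every
eigenvalue of `A` is an integer. -/
theorem diagonalizable_of_exp_eq_id
    {n : ℕ} (A : EuclideanSpace ℂ (Fin n) →L[ℂ] EuclideanSpace ℂ (Fin n))
    (hA : NormedSpace.exp (((2 * Real.pi * Complex.I) : ℂ) • A) = 1) :
    (∃ b : Module.Basis (Fin n) ℂ (EuclideanSpace ℂ (Fin n)),
      ∀ j, ∃ μ : ℂ, A (b j) = μ • b j) ∧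
    (∀ (μ : ℂ) (v : EuclideanSpace ℂ (Fin n)), v ≠ 0 → A v = μ • v →
      ∃ k : ℤ, μ = (k : ℂ)) := by
  set E := EuclideanSpace ℂ (Fin n)
  refine ⟨?_, fun μ v hv h => eig_int A hA μ v hv h⟩
  -- set of eigenvectors
  set S : Set E := {v | ∃ μ : ℂ, A v = μ • v} with hS
  have hspanS : Submodule.span ℂ S = ⊤ := by
    rw [eq_top_iff]
    rw [← Module.End.iSup_maxGenEigenspace_eq_top (A : Module.End ℂ E)]
    refine iSup_le fun μ => ?_
    intro x hx
    obtain ⟨k, hk⟩ := (Module.End.mem_maxGenEigenspace _ _ _).mp hx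
    have hcoe : ∀ (j : ℕ) (y : E), (((A : Module.End ℂ E) - μ • (1 : Module.End ℂ E)) ^ j) y
        = (((A - μ • (1 : E →L[ℂ] E)) ^ j)) y := by
      intro j
      induction j with
      | zero => intro y; rfl
      | succ j ih =>
        intro y
        rw [pow_succ', pow_succ', Module.End.mul_apply, ContinuousLinearMap.mul_apply, ih,
          LinearMap.sub_apply, LinearMap.smul_apply, Module.End.one_apply]
        simp [ContinuousLinearMap.sub_apply]
    have hx' : (((A - μ • (1 : E →L[ℂ] E)) ^ k)) x = 0 := by rw [← hcoe]; exact hk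
    have := nilp_eigen A hA μ k x hx'
    exact Submodule.subset_span ⟨μ, this⟩
  obtain ⟨b, hbS, hbspan, hli⟩ := exists_linearIndependent ℂ S
  rw [hspanS] at hbspan
  let bas : Module.Basis b ℂ E := Module.Basis.mk hli (by rw [Subtype.range_coe, hbspan])
  haveI : Fintype b := FiniteDimensional.fintypeBasisIndex bas
  have hcard : Fintype.card b = n := by
    have h1 := Module.finrank_eq_card_basis bas
    rw [finrank_euclideanSpace_fin] at h1
    omega
  let e : b ≃ Fin n := Fintype.equivFinOfCardEq hcard
  refine ⟨bas.reindex e, fun j => ?_⟩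
  have : (bas.reindex e) j = ((e.symm j : E)) := by
    rw [Module.Basis.reindex_apply, Module.Basis.mk_apply]
  rw [this]
  exact hbS (e.symm j).2
end

section
/- (Lemma 3.2) Let G be a group acting by biholomorphisms on complex manifolds M and N via actions φ and ψ with fixed points p ∈ M and q ∈ N. If φ ≃_{pq} ψ by F_D : U → V, then φ ∼_{pq} ψ by F : U → V. Moreover, the relation ≃ is symmetric: if φ ≃_{pq} ψ by F_D : U → V, then ψ ≃_{qp} φ by (F⁻¹)_E : V → U, where E = F(D). -/
open scoped Manifold
section AnalyticManifoldDef
open Set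
variable {𝕜 : Type*} [NontriviallyNormedField 𝕜] {E : Type*} [NormedAddCommGroup E]
  [NormedSpace 𝕜 E] {H : Type*} [TopologicalSpace H] (I : ModelWithCorners 𝕜 E H)

def analyticPregroupoid : Pregroupoid H where
  property f s := AnalyticOn 𝕜 (I ∘ f ∘ I.symm) (I.symm ⁻¹' s ∩ range I)
  comp {f g u v} hf hg _ _ _ := by
    have : I ∘ (g ∘ f) ∘ I.symm = (I ∘ g ∘ I.symm) ∘ I ∘ f ∘ I.symm := by ext x; simp
    simp only [this]
    apply hg.comp
    · exact hf.mono fun _ ⟨hx1, hx2⟩ ↦ ⟨hx1.1, hx2⟩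
    · intro x ⟨hx1, _⟩
      simpa only [mfld_simps] using hx1.2
  id_mem := by
    apply analyticOn_id.congr
    intro x hx
    simp only [Function.comp_apply, id_eq]
    exact (I.right_inv hx.2)
  locality {f u} _ H := by
    apply analyticOn_of_locally_analyticOn
    intro y ⟨hy1, hy2⟩
    rcases H (I.symm y) hy1 with ⟨v, v_open, yv, hv⟩
    have : I.symm ⁻¹' (u ∩ v) ∩ range I = I.symm ⁻¹' u ∩ range I ∩ I.symm ⁻¹' v := by
      ext; simp only [mem_inter_iff, mem_preimage]; tauto
    exact ⟨I.symm ⁻¹' v, v_open.preimage I.continuous_symm, by simpa, this ▸ hv⟩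
  congr {f g u} _ fg hf := by
    apply hf.congr
    intro y ⟨hy1, _⟩
    simp only [Function.comp_apply] at hy1 ⊢
    rw [fg _ hy1]

def analyticGroupoid : StructureGroupoid H :=
  (analyticPregroupoid I).groupoid

class AnalyticManifold (M : Type*) [TopologicalSpace M] [ChartedSpace H M] : Prop
    extends HasGroupoid M (analyticGroupoid I)
end AnalyticManifoldDef

/-- **Lemma 3.2.** Let `G` be a group acting by biholomorphisms on complex manifolds
`M` and `N` via actions `φ` and `ψ`, with fixed points `p ∈ M` and `q ∈ N`. If
`φ ≃_{pq} ψ` by `F_D : U → V`, then `φ ∼_{pq} ψ` by `F : U → V`. Moreover the relation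
`≃` is symmetric: if `φ ≃_{pq} ψ` by `F_D : U → V`, then `ψ ≃_{qp} φ` by
`(F⁻¹)_E : V → U` where `E = F(D)`. -/
theorem simeq_rel_implies_sim_and_symm
    {E : Type*} [NormedAddCommGroup E] [NormedSpace ℂ E]
    {M : Type*} [TopologicalSpace M] [ChartedSpace E M] [AnalyticManifold 𝓘(ℂ, E) M]
    {E' : Type*} [NormedAddCommGroup E'] [NormedSpace ℂ E']
    {N : Type*} [TopologicalSpace N] [ChartedSpace E' N] [AnalyticManifold 𝓘(ℂ, E') N]
    {G : Type*} [Group G]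
    (φ : G → M → M) (ψ : G → N → N)
    (hφ_one : φ 1 = id) (hφ_mul : ∀ g h : G, φ (g * h) = φ g ∘ φ h)
    (hφ_hol : ∀ g : G, MDifferentiable 𝓘(ℂ, E) 𝓘(ℂ, E) (φ g))
    (hψ_one : ψ 1 = id) (hψ_mul : ∀ g h : G, ψ (g * h) = ψ g ∘ ψ h)
    (hψ_hol : ∀ g : G, MDifferentiable 𝓘(ℂ, E') 𝓘(ℂ, E') (ψ g))
    (p : M) (hp : ∀ g : G, φ g p = p)
    (q : N) (hq : ∀ g : G, ψ g q = q)
    (U : Set M) (hU : IsOpen U) (hUconn : IsConnected U) (hpU : p ∈ U)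
    (V : Set N) (hV : IsOpen V) (hVconn : IsConnected V) (hqV : q ∈ V)
    (F : M → N) (F' : N → M)
    (hF_bij : Set.BijOn F U V) (hFp : F p = q)
    (hF_hol : MDifferentiableOn 𝓘(ℂ, E) 𝓘(ℂ, E') F U)
    (hF'_hol : MDifferentiableOn 𝓘(ℂ, E') 𝓘(ℂ, E) F' V)
    (hF'F : ∀ x ∈ U, F' (F x) = x) (hFF' : ∀ y ∈ V, F (F' y) = y)
    (D : Set M) (hD : IsOpen D) (hpD : p ∈ D) (hDcl : closure D ⊆ U)
    -- `φ ≃_{pq} ψ` by `F_D : U → V`: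
    (hsimeq : ∀ g : G,
      (φ g '' D ⊆ U ∧ ∀ x ∈ D, ψ g (F x) = F (φ g x)) ∨
      (U ⊆ φ g '' U ∧ ∀ x ∈ (φ g) ⁻¹' U, ψ g (F x) = F (φ g x))) :
    -- `φ ∼_{pq} ψ` by `F : U → V` ...
    (∀ g : G, ∃ W : Set M, IsOpen W ∧ W.Nonempty ∧ W ⊆ U ∩ (φ g) ⁻¹' U ∧
      ∀ x ∈ W, ψ g (F x) = F (φ g x)) ∧
    -- ... and `ψ ≃_{qp} φ` by `(F⁻¹)_E : V → U` with `E = F(D)`: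
    (∀ g : G,
      (ψ g '' (F '' D) ⊆ V ∧ ∀ y ∈ F '' D, φ g (F' y) = F' (ψ g y)) ∨
      (V ⊆ ψ g '' V ∧ ∀ y ∈ (ψ g) ⁻¹' V, φ g (F' y) = F' (ψ g y))) := by
  have hDU : D ⊆ U := subset_closure.trans hDcl
  have hψinv : ∀ (g : G) (y : N), ψ g⁻¹ (ψ g y) = y := by
    intro g y
    have h := congrFun (hψ_mul g⁻¹ g) y
    simpa [hψ_one] using h.symm
  have hψinj : ∀ g : G, Function.Injective (ψ g) := by
    intro g a b hab
    have := congrArg (ψ g⁻¹) hab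
    rwa [hψinv, hψinv] at this
  constructor
  · intro g
    rcases hsimeq g with ⟨h1, h2⟩ | ⟨h1, h2⟩
    · exact ⟨D, hD, ⟨p, hpD⟩, fun x hx => ⟨hDU hx, h1 ⟨x, hx, rfl⟩⟩, h2⟩
    · refine ⟨U ∩ (φ g) ⁻¹' U, hU.inter (hU.preimage (hφ_hol g).continuous),
        ⟨p, hpU, by simpa [hp g] using hpU⟩, subset_rfl, fun x hx => h2 x hx.2⟩
  · intro g
    rcases hsimeq g with ⟨h1, h2⟩ | ⟨h1, h2⟩
    · left
      constructor
      · rintro _ ⟨_, ⟨x, hxD, rfl⟩, rfl⟩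
        rw [h2 x hxD]
        exact hF_bij.mapsTo (h1 ⟨x, hxD, rfl⟩)
      · rintro _ ⟨x, hxD, rfl⟩
        rw [hF'F x (hDU hxD), h2 x hxD, hF'F _ (h1 ⟨x, hxD, rfl⟩)]
    · right
      constructor
      · intro y hyV
        obtain ⟨u, huU, hu⟩ := hF_bij.surjOn hyV
        obtain ⟨u', hu'U, hu'⟩ := h1 huU
        have : ψ g (F u') = y := by
          rw [h2 u' (by rw [Set.mem_preimage, hu']; exact huU), hu', hu]
        exact ⟨F u', hF_bij.mapsTo hu'U, this⟩
      · intro y hy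
        obtain ⟨u, huU, hu⟩ := hF_bij.surjOn (Set.mem_preimage.mp hy)
        obtain ⟨u', hu'U, hu'⟩ := h1 huU
        have hFu' : ψ g (F u') = F u := by
          rw [h2 u' (by rw [Set.mem_preimage, hu']; exact huU), hu']
        have hy' : F u' = y := hψinj g (by rw [hFu', hu])
        rw [← hy', hF'F u' hu'U, hu', hFu', hF'F u huU]
end

section
/- (Lemma 3.4) Let G be a group acting by biholomorphisms on complex manifolds M and N via actions φ and ψ with fixed points p ∈ M and q ∈ N. If φ ≃_{pq} ψ by F_D : U → V, then there is a biholomorphism T : Sat(D,φ) → Sat(F(D),ψ) between the saturations that extends F restricted to D and satisfies ψ^g ∘ T = T ∘ φ^g on Sat(D,φ) for every g ∈ G. -/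
open scoped Manifold

/-- **Lemma 3.4.** Let `G` be a group acting by biholomorphisms on complex manifolds
`M` and `N` via actions `φ` and `ψ`, with fixed points `p ∈ M` and `q ∈ N`. If
`φ ≃_{pq} ψ` by `F_D : U → V`, then there is a biholomorphism
`T : Sat(D, φ) → Sat(F(D), ψ)` between the saturations that extends `F` restricted to
`D` and satisfies `ψᵍ ∘ T = T ∘ φᵍ` on `Sat(D, φ)` for every `g ∈ G`. -/
theorem biholomorphism_between_saturations
    {E : Type*} [NormedAddCommGroup E] [NormedSpace ℂ E]
    {M : Type*} [TopologicalSpace M] [ChartedSpace E M] [IsManifold 𝓘(ℂ, E) (⊤ : WithTop ℕ∞) M]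
    {E' : Type*} [NormedAddCommGroup E'] [NormedSpace ℂ E']
    {N : Type*} [TopologicalSpace N] [ChartedSpace E' N] [IsManifold 𝓘(ℂ, E') (⊤ : WithTop ℕ∞) N]
    {G : Type*} [Group G]
    (φ : G → M → M) (ψ : G → N → N)
    (hφ_one : φ 1 = id) (hφ_mul : ∀ g h : G, φ (g * h) = φ g ∘ φ h)
    (hφ_hol : ∀ g : G, MDifferentiable 𝓘(ℂ, E) 𝓘(ℂ, E) (φ g))
    (hψ_one : ψ 1 = id) (hψ_mul : ∀ g h : G, ψ (g * h) = ψ g ∘ ψ h)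
    (hψ_hol : ∀ g : G, MDifferentiable 𝓘(ℂ, E') 𝓘(ℂ, E') (ψ g))
    (p : M) (hp : ∀ g : G, φ g p = p)
    (q : N) (hq : ∀ g : G, ψ g q = q)
    (U : Set M) (hU : IsOpen U) (hUconn : IsConnected U) (hpU : p ∈ U)
    (V : Set N) (hV : IsOpen V) (hVconn : IsConnected V) (hqV : q ∈ V)
    (F : M → N) (F' : N → M)
    (hF_bij : Set.BijOn F U V) (hFp : F p = q)
    (hF_hol : MDifferentiableOn 𝓘(ℂ, E) 𝓘(ℂ, E') F U)
    (hF'_hol : MDifferentiableOn 𝓘(ℂ, E') 𝓘(ℂ, E) F' V)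
    (hF'F : ∀ x ∈ U, F' (F x) = x) (hFF' : ∀ y ∈ V, F (F' y) = y)
    (D : Set M) (hD : IsOpen D) (hpD : p ∈ D) (hDcl : closure D ⊆ U)
    -- `φ ≃_{pq} ψ` by `F_D : U → V`:
    (hsimeq : ∀ g : G,
      (φ g '' D ⊆ U ∧ ∀ x ∈ D, ψ g (F x) = F (φ g x)) ∨
      (U ⊆ φ g '' U ∧ ∀ x ∈ (φ g) ⁻¹' U, ψ g (F x) = F (φ g x))) :
    -- there is a biholomorphism `T : Sat(D, φ) → Sat(F(D), ψ)` extending `F|_D`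
    -- and conjugating the two actions:
    ∃ T : M → N,
      Set.BijOn T {x : M | ∃ g : G, φ g x ∈ D} {y : N | ∃ g : G, ψ g y ∈ F '' D} ∧
      MDifferentiableOn 𝓘(ℂ, E) 𝓘(ℂ, E') T {x : M | ∃ g : G, φ g x ∈ D} ∧
      (∃ S : N → M,
        MDifferentiableOn 𝓘(ℂ, E') 𝓘(ℂ, E) S {y : N | ∃ g : G, ψ g y ∈ F '' D} ∧
        (∀ x ∈ {x : M | ∃ g : G, φ g x ∈ D}, S (T x) = x) ∧
        (∀ y ∈ {y : N | ∃ g : G, ψ g y ∈ F '' D}, T (S y) = y)) ∧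
      (∀ x ∈ D, T x = F x) ∧
      (∀ g : G, ∀ x ∈ {x : M | ∃ g : G, φ g x ∈ D}, ψ g (T x) = T (φ g x)) := by
  classical
  have hDU : D ⊆ U := Set.Subset.trans subset_closure hDcl
  have hφ_inv : ∀ (g : G) (x : M), φ g⁻¹ (φ g x) = x := by
    intro g x
    have h := congrFun (hφ_mul g⁻¹ g) x
    rw [inv_mul_cancel, hφ_one] at h
    exact h.symm
  have hψ_inv : ∀ (g : G) (y : N), ψ g⁻¹ (ψ g y) = y := by
    intro g y
    have h := congrFun (hψ_mul g⁻¹ g) y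
    rw [inv_mul_cancel, hψ_one] at h
    exact h.symm
  have hψ_inv' : ∀ (g : G) (y : N), ψ g (ψ g⁻¹ y) = y := by
    intro g y; have := hψ_inv g⁻¹ y; rwa [inv_inv] at this
  have hψ_inj : ∀ (g : G), Function.Injective (ψ g) := by
    intro g a b hab
    have := congrArg (ψ g⁻¹) hab
    rwa [hψ_inv, hψ_inv] at this
  have hFDV : F '' D ⊆ V := fun y ⟨d, hd, hfd⟩ => hfd ▸ hF_bij.mapsTo (hDU hd)
  -- Key lemma L
  have hL : ∀ (k : G) (y : M), y ∈ D → φ k y ∈ U → ψ k (F y) = F (φ k y) := by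
    intro k y hyD hyU
    rcases hsimeq k with ⟨_, h⟩ | ⟨_, h⟩
    · exact h y hyD
    · exact h y hyU
  -- Key lemma L'
  have hL' : ∀ (k : G) (y : M), y ∈ D → ψ k (F y) ∈ V → F' (ψ k (F y)) = φ k y := by
    intro k y hyD hyV
    rcases hsimeq k with ⟨hsub, h⟩ | ⟨hsub, h⟩
    · rw [h y hyD, hF'F _ (hsub ⟨y, hyD, rfl⟩)]
    · obtain ⟨w, hwU, hw⟩ := hF_bij.surjOn hyV
      obtain ⟨u, huU, hu⟩ := hsub hwU
      have h1 : ψ k (F u) = F w := by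
        rw [h u (by simpa [hu] using hwU), hu]
      have h2 : F u = F y := hψ_inj k (h1.trans hw)
      have h3 : u = y := hF_bij.injOn huU (hDU hyD) h2
      rw [← hw, hF'F w hwU, ← hu, h3]
  -- well-definedness for T
  have hwd : ∀ (g h : G) (x : M), φ g x ∈ D → φ h x ∈ D →
      ψ g⁻¹ (F (φ g x)) = ψ h⁻¹ (F (φ h x)) := by
    intro g h x hg hh
    have hk : φ (h * g⁻¹) (φ g x) = φ h x := by
      have := congrFun (hφ_mul (h * g⁻¹) g) x
      rw [inv_mul_cancel_right] at this
      exact this.symm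
    have hL1 := hL (h * g⁻¹) (φ g x) hg (by rw [hk]; exact hDU hh)
    rw [hk] at hL1
    rw [← hL1]
    have := congrFun (hψ_mul h⁻¹ (h * g⁻¹)) (F (φ g x))
    rw [show h⁻¹ * (h * g⁻¹) = g⁻¹ by group] at this
    exact this
  -- well-definedness for S
  have hwd' : ∀ (g h : G) (y : N), ψ g y ∈ F '' D → ψ h y ∈ F '' D →
      φ g⁻¹ (F' (ψ g y)) = φ h⁻¹ (F' (ψ h y)) := by
    intro g h y hg hh
    obtain ⟨d, hdD, hd⟩ := hg
    have hk : ψ (h * g⁻¹) (F d) = ψ h y := by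
      rw [hd]
      have := congrFun (hψ_mul (h * g⁻¹) g) y
      rw [inv_mul_cancel_right] at this
      exact this.symm
    have hL1 := hL' (h * g⁻¹) d hdD (by rw [hk]; exact hFDV hh)
    rw [hk] at hL1
    rw [hL1, ← hd, hF'F d (hDU hdD)]
    have := congrFun (hφ_mul h⁻¹ (h * g⁻¹)) d
    rw [show h⁻¹ * (h * g⁻¹) = g⁻¹ by group] at this
    simpa using this
  -- definitions of T and S
  let T : M → N := fun x =>
    if hx : ∃ g : G, φ g x ∈ D then ψ hx.choose⁻¹ (F (φ hx.choose x)) else q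
  let S : N → M := fun y =>
    if hy : ∃ g : G, ψ g y ∈ F '' D then φ hy.choose⁻¹ (F' (ψ hy.choose y)) else p
  have hT : ∀ (g : G) (x : M), φ g x ∈ D → T x = ψ g⁻¹ (F (φ g x)) := by
    intro g x hg
    have hx : ∃ g : G, φ g x ∈ D := ⟨g, hg⟩
    simp only [T, dif_pos hx]
    exact hwd hx.choose g x hx.choose_spec hg
  have hS : ∀ (g : G) (y : N), ψ g y ∈ F '' D → S y = φ g⁻¹ (F' (ψ g y)) := by
    intro g y hg
    have hy : ∃ g : G, ψ g y ∈ F '' D := ⟨g, hg⟩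
    simp only [S, dif_pos hy]
    exact hwd' hy.choose g y hy.choose_spec hg
  -- T maps Sat(D,φ) into Sat(F(D),ψ)
  have hTmaps : ∀ x ∈ {x : M | ∃ g : G, φ g x ∈ D}, T x ∈ {y : N | ∃ g : G, ψ g y ∈ F '' D} := by
    rintro x ⟨g, hg⟩
    refine ⟨g, ?_⟩
    rw [hT g x hg, hψ_inv' g]
    exact ⟨φ g x, hg, rfl⟩
  -- S maps Sat(F(D),ψ) into Sat(D,φ)
  have hSmaps : ∀ y ∈ {y : N | ∃ g : G, ψ g y ∈ F '' D}, S y ∈ {x : M | ∃ g : G, φ g x ∈ D} := by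
    rintro y ⟨g, hg⟩
    obtain ⟨d, hdD, hd⟩ := hg
    refine ⟨g, ?_⟩
    have hSy : S y = φ g⁻¹ d := by
      rw [hS g y ⟨d, hdD, hd⟩, ← hd, hF'F d (hDU hdD)]
    rw [hSy]
    have : φ g (φ g⁻¹ d) = d := by
      have := hφ_inv g⁻¹ d; rwa [inv_inv] at this
    rw [this]; exact hdD
  -- S ∘ T = id on Sat
  have hST : ∀ x ∈ {x : M | ∃ g : G, φ g x ∈ D}, S (T x) = x := by
    rintro x ⟨g, hg⟩
    have h1 : ψ g (T x) = F (φ g x) := by rw [hT g x hg, hψ_inv' g]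
    have h2 : ψ g (T x) ∈ F '' D := h1 ▸ ⟨φ g x, hg, rfl⟩
    rw [hS g (T x) h2, h1, hF'F _ (hDU hg), hφ_inv g x]
  -- T ∘ S = id on Sat
  have hTS : ∀ y ∈ {y : N | ∃ g : G, ψ g y ∈ F '' D}, T (S y) = y := by
    rintro y ⟨g, hg⟩
    obtain ⟨d, hdD, hd⟩ := hg
    have hSy : S y = φ g⁻¹ d := by
      rw [hS g y ⟨d, hdD, hd⟩, ← hd, hF'F d (hDU hdD)]
    have h1 : φ g (S y) = d := by
      rw [hSy]
      have := hφ_inv g⁻¹ d; rwa [inv_inv] at this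
    rw [hT g (S y) (h1 ▸ hdD), h1, hd, hψ_inv g y]
  -- T extends F on D
  have hTD : ∀ x ∈ D, T x = F x := by
    intro x hx
    have h1 : φ 1 x ∈ D := by rw [hφ_one]; exact hx
    rw [hT 1 x h1, hφ_one, inv_one, hψ_one]; rfl
  -- equivariance
  have hequiv : ∀ g : G, ∀ x ∈ {x : M | ∃ g : G, φ g x ∈ D}, ψ g (T x) = T (φ g x) := by
    rintro g x ⟨h, hh⟩
    have hk : φ (h * g⁻¹) (φ g x) = φ h x := by
      have := congrFun (hφ_mul (h * g⁻¹) g) x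
      rw [inv_mul_cancel_right] at this
      exact this.symm
    rw [hT (h * g⁻¹) (φ g x) (hk ▸ hh), hk, hT h x hh]
    have := congrFun (hψ_mul g h⁻¹) (F (φ h x))
    rw [show g * h⁻¹ = (h * g⁻¹)⁻¹ by group] at this
    exact (this.trans rfl).symm
  -- openness helpers and holomorphy of T
  have hTdiff : MDifferentiableOn 𝓘(ℂ, E) 𝓘(ℂ, E') T {x : M | ∃ g : G, φ g x ∈ D} := by
    rintro x ⟨g, hg⟩
    have hopen : IsOpen ((φ g) ⁻¹' D) := hD.preimage (hφ_hol g).continuous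
    have heq : T =ᶠ[nhds x] fun z => ψ g⁻¹ (F (φ g z)) :=
      Filter.eventuallyEq_of_mem (hopen.mem_nhds hg) (fun z hz => hT g z hz)
    have h1 : MDifferentiableAt 𝓘(ℂ, E) 𝓘(ℂ, E) (φ g) x := (hφ_hol g) x
    have h2 : MDifferentiableAt 𝓘(ℂ, E) 𝓘(ℂ, E') F (φ g x) :=
      hF_hol.mdifferentiableAt (hU.mem_nhds (hDU hg))
    have h3 : MDifferentiableAt 𝓘(ℂ, E') 𝓘(ℂ, E') (ψ g⁻¹) (F (φ g x)) := (hψ_hol g⁻¹) _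
    have hc : MDifferentiableAt 𝓘(ℂ, E) 𝓘(ℂ, E') (fun z => ψ g⁻¹ (F (φ g z))) x :=
      (h3.comp x (h2.comp x h1) : _)
    exact (hc.congr_of_eventuallyEq heq).mdifferentiableWithinAt
  -- holomorphy of S
  have hFDopen : IsOpen (F '' D) := by
    have hkey : F '' D = V ∩ F' ⁻¹' D := by
      ext y
      constructor
      · rintro ⟨d, hdD, rfl⟩
        exact ⟨hF_bij.mapsTo (hDU hdD), by simpa [hF'F d (hDU hdD)] using hdD⟩
      · rintro ⟨hyV, hyD⟩
        exact ⟨F' y, hyD, hFF' y hyV⟩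
    rw [hkey]
    exact hF'_hol.continuousOn.isOpen_inter_preimage hV hD
  have hSdiff : MDifferentiableOn 𝓘(ℂ, E') 𝓘(ℂ, E) S {y : N | ∃ g : G, ψ g y ∈ F '' D} := by
    rintro y ⟨g, hg⟩
    have hopen : IsOpen ((ψ g) ⁻¹' (F '' D)) := hFDopen.preimage (hψ_hol g).continuous
    have heq : S =ᶠ[nhds y] fun z => φ g⁻¹ (F' (ψ g z)) :=
      Filter.eventuallyEq_of_mem (hopen.mem_nhds hg) (fun z hz => hS g z hz)
    have h1 : MDifferentiableAt 𝓘(ℂ, E') 𝓘(ℂ, E') (ψ g) y := (hψ_hol g) y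
    have h2 : MDifferentiableAt 𝓘(ℂ, E') 𝓘(ℂ, E) F' (ψ g y) :=
      hF'_hol.mdifferentiableAt (hV.mem_nhds (hFDV hg))
    have h3 : MDifferentiableAt 𝓘(ℂ, E) 𝓘(ℂ, E) (φ g⁻¹) (F' (ψ g y)) := (hφ_hol g⁻¹) _
    have hc : MDifferentiableAt 𝓘(ℂ, E') 𝓘(ℂ, E) (fun z => φ g⁻¹ (F' (ψ g z))) y :=
      (h3.comp y (h2.comp y h1) : _)
    exact (hc.congr_of_eventuallyEq heq).mdifferentiableWithinAt
  refine ⟨T, ⟨hTmaps, ?_, ?_⟩, hTdiff, ⟨S, hSdiff, hST, hTS⟩, hTD, hequiv⟩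
  · intro a ha b hb hab
    have := hST a ha
    rw [hab, hST b hb] at this
    exact this.symm
  · intro y hy
    exact ⟨S y, hSmaps y hy, hTS y hy⟩
end
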